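/- Fix a ∈ (0, 1) and b ≥ 0. There exists a unique cv_{1−a}(b) > 0 such that r(b; cv_{1−a}(b)) = a, where r(b; c) = Φ(−c − b) + Φ(−c + b). Moreover, the map b ↦ cv_{1−a}(b) is strictly increasing on [0, ∞). -/

import Mathlib

open MeasureTheory ProbabilityTheory

/-- Standard normal CDF. -/
noncomputable def Phi (x : ℝ) : ℝ := ((gaussianReal 0 1) (Set.Iic x)).toReal

/-- `r(b; c) = Φ(−c − b) + Φ(−c + b)`. -/
noncomputable def r (b c : ℝ) : ℝ := Phi (-c - b) + Phi (-c + b)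

noncomputable def phi (x : ℝ) : ℝ := gaussianPDFReal 0 1 x

lemma phi_pos (x : ℝ) : 0 < phi x := gaussianPDFReal_pos 0 1 x one_ne_zero

lemma phi_integrable : Integrable phi := integrable_gaussianPDFReal 0 1

lemma phi_continuous : Continuous phi := by
  unfold phi gaussianPDFReal
  fun_prop

lemma phi_even (x : ℝ) : phi (-x) = phi x := by
  unfold phi gaussianPDFReal
  norm_num

lemma phi_total : ∫ x, phi x = 1 := integral_gaussianPDFReal_eq_one 0 one_ne_zero

lemma phi_lt_phi {s t : ℝ} (h : t ^ 2 < s ^ 2) : phi s < phi t := by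
  unfold phi gaussianPDFReal
  have hK : (0:ℝ) < (Real.sqrt (2 * Real.pi * (1:NNReal)))⁻¹ := by
    rw [inv_pos]
    apply Real.sqrt_pos.2
    positivity
  apply mul_lt_mul_of_pos_left _ hK
  apply Real.exp_lt_exp.2
  push_cast
  nlinarith

lemma Phi_eq (x : ℝ) : Phi x = ∫ t in Set.Iic x, phi t := by
  rw [Phi, gaussianReal_apply_eq_integral 0 one_ne_zero,
    ENNReal.toReal_ofReal (setIntegral_nonneg measurableSet_Iic
      fun t _ => gaussianPDFReal_nonneg 0 1 t)]
  rfl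

lemma Phi_sub (x y : ℝ) : Phi y - Phi x = ∫ t in x..y, phi t := by
  rw [Phi_eq, Phi_eq]
  exact intervalIntegral.integral_Iic_sub_Iic phi_integrable.integrableOn
    phi_integrable.integrableOn

lemma Phi_strictMono : StrictMono Phi := by
  intro x y h
  have h1 := Phi_sub x y
  have h2 : 0 < ∫ t in x..y, phi t :=
    intervalIntegral.intervalIntegral_pos_of_pos phi_integrable.intervalIntegrable phi_pos h
  linarith

lemma Phi_continuous : Continuous Phi := by
  have h : Phi = fun x => Phi 0 + ∫ t in (0:ℝ)..x, phi t := by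
    funext x
    have := Phi_sub 0 x
    linarith
  rw [h]
  exact continuous_const.add
    (intervalIntegral.continuous_primitive (fun a b => phi_integrable.intervalIntegrable) 0)

lemma Phi_neg (x : ℝ) : Phi (-x) = 1 - Phi x := by
  have h1 : (∫ t in Set.Iic (-x), phi (-t)) = ∫ t in Set.Ioi (-(-x)), phi t :=
    integral_comp_neg_Iic (-x) phi
  simp only [phi_even, neg_neg] at h1
  have h2 : (∫ t in Set.Iic x, phi t) + ∫ t in Set.Ioi x, phi t = ∫ t, phi t :=
    intervalIntegral.integral_Iic_add_Ioi phi_integrable.integrableOn phi_integrable.integrableOn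
  rw [phi_total] at h2
  rw [Phi_eq, Phi_eq, h1]
  linarith

lemma Phi_atTop : Filter.Tendsto Phi Filter.atTop (nhds 1) := by
  have h := MeasureTheory.tendsto_measure_Iic_atTop (gaussianReal 0 1)
  rw [measure_univ] at h
  have h2 := (ENNReal.tendsto_toReal (a := 1) (by simp)).comp h
  simp at h2
  exact h2

lemma Phi_atBot : Filter.Tendsto Phi Filter.atBot (nhds 0) := by
  have h : Filter.Tendsto (fun x => Phi (-x)) Filter.atBot (nhds 1) :=
    Phi_atTop.comp Filter.tendsto_neg_atBot_atTop
  have h2 : Filter.Tendsto (fun x => 1 - Phi (-x)) Filter.atBot (nhds (1 - 1)) :=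
    tendsto_const_nhds.sub h
  norm_num at h2
  convert h2 using 2 with x
  rw [Phi_neg]
  ring

lemma r_continuous (b : ℝ) : Continuous (fun c => r b c) := by
  unfold r
  exact (Phi_continuous.comp (by continuity)).add (Phi_continuous.comp (by continuity))

lemma r_anti (b : ℝ) : StrictAnti (fun c => r b c) := by
  intro c₁ c₂ h
  show r b c₂ < r b c₁
  unfold r
  have h1 : Phi (-c₂ - b) < Phi (-c₁ - b) := Phi_strictMono (by linarith)
  have h2 : Phi (-c₂ + b) < Phi (-c₁ + b) := Phi_strictMono (by linarith)
  linarith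

lemma r_zero (b : ℝ) : r b 0 = 1 := by
  unfold r
  have h := Phi_neg b
  norm_num
  linarith

lemma r_atTop (b : ℝ) : Filter.Tendsto (fun c => r b c) Filter.atTop (nhds 0) := by
  have h1 : Filter.Tendsto (fun c : ℝ => -c - b) Filter.atTop Filter.atBot := by
    apply Filter.tendsto_atBot_add_const_right
    exact Filter.tendsto_neg_atTop_atBot
  have h2 : Filter.Tendsto (fun c : ℝ => -c + b) Filter.atTop Filter.atBot := by
    apply Filter.tendsto_atBot_add_const_right
    exact Filter.tendsto_neg_atTop_atBot
  have := (Phi_atBot.comp h1).add (Phi_atBot.comp h2)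
  norm_num at this
  exact this

/-- Strict monotonicity in `b` for fixed `c > 0`. -/
lemma r_lt_r {b₁ b₂ c : ℝ} (hb₁ : 0 ≤ b₁) (hb : b₁ < b₂) (hc : 0 < c) :
    r b₁ c < r b₂ c := by
  have key : (∫ t in (b₁ - c)..(b₂ - c), phi (t + 2 * c)) < ∫ t in (b₁ - c)..(b₂ - c), phi t := by
    apply intervalIntegral.integral_lt_integral_of_continuousOn_of_le_of_exists_lt
      (by linarith)
    · exact (phi_continuous.comp (by fun_prop)).continuousOn
    · exact phi_continuous.continuousOn
    · intro t ht
      apply le_of_lt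
      apply phi_lt_phi
      have h1 : b₁ - c < t := ht.1
      nlinarith
    · refine ⟨b₂ - c, ⟨by linarith, le_refl _⟩, ?_⟩
      apply phi_lt_phi
      nlinarith
  have shift : (∫ t in (b₁ - c)..(b₂ - c), phi (t + 2 * c))
      = ∫ t in (b₁ + c)..(b₂ + c), phi t := by
    rw [intervalIntegral.integral_comp_add_right]
    ring_nf
  have e1 := Phi_sub (b₁ - c) (b₂ - c)
  have e2 := Phi_sub (b₁ + c) (b₂ + c)
  have e3 := Phi_neg (c + b₁)
  have e4 := Phi_neg (c + b₂)
  have hlt : Phi (b₂ + c) - Phi (b₁ + c) < Phi (b₂ - c) - Phi (b₁ - c) := by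
    rw [e1, e2]
    rw [shift] at key
    exact key
  unfold r
  have hr1 : -c - b₁ = -(c + b₁) := by ring
  have hr2 : -c - b₂ = -(c + b₂) := by ring
  have hr3 : -c + b₁ = b₁ - c := by ring
  have hr4 : -c + b₂ = b₂ - c := by ring
  rw [hr1, hr2, hr3, hr4, e3, e4]
  have hb1c : b₁ + c = c + b₁ := by ring
  have hb2c : b₂ + c = c + b₂ := by ring
  rw [hb1c, hb2c] at hlt
  linarith

/-- For `a ∈ (0,1)` and each `b ≥ 0` there is a unique `c > 0` with
`r(b; c) = a`; moreover this critical value is strictly increasing in `b` on `[0, ∞)`. -/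
theorem stmt3 (a : ℝ) (ha : a ∈ Set.Ioo (0:ℝ) 1) :
    (∀ b : ℝ, 0 ≤ b → ∃! c : ℝ, 0 < c ∧ r b c = a) ∧
    (∀ b₁ b₂ c₁ c₂ : ℝ, 0 ≤ b₁ → b₁ < b₂ →
      0 < c₁ → r b₁ c₁ = a → 0 < c₂ → r b₂ c₂ = a → c₁ < c₂) := by
  obtain ⟨ha0, ha1⟩ := ha
  constructor
  · intro b hb
    -- find M with r b M < a and M > 0
    have hev : ∀ᶠ M in Filter.atTop, r b M < a :=
      (r_atTop b).eventually_lt_const ha0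
    obtain ⟨M, hM, hM0⟩ := (hev.and (Filter.eventually_gt_atTop 0)).exists
    -- IVT
    have hsub : Set.Ioo (r b M) (r b 0) ⊆ (fun c => r b c) '' Set.Ioo 0 M :=
      intermediate_value_Ioo' hM0.le (r_continuous b).continuousOn
    have hmem : a ∈ Set.Ioo (r b M) (r b 0) := by
      rw [r_zero]
      exact ⟨hM, ha1⟩
    obtain ⟨c, hc, hrc⟩ := hsub hmem
    simp only [] at hrc
    refine ⟨c, ⟨hc.1, hrc⟩, ?_⟩
    intro c' ⟨hc', hrc'⟩
    by_contra hne
    rcases lt_or_gt_of_ne hne with h | h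
    · have : r b c < r b c' := r_anti b h
      rw [hrc', hrc] at this
      exact lt_irrefl a this
    · have : r b c' < r b c := r_anti b h
      rw [hrc', hrc] at this
      exact lt_irrefl a this
  · intro b₁ b₂ c₁ c₂ hb₁ hb hc₁ hr₁ hc₂ hr₂
    by_contra hle
    push_neg at hle
    -- c₂ ≤ c₁, so r b₂ c₁ ≤ r b₂ c₂ = a, but r b₂ c₁ > r b₁ c₁ = a
    have h1 : r b₁ c₁ < r b₂ c₁ := r_lt_r hb₁ hb hc₁
    have h2 : r b₂ c₁ ≤ r b₂ c₂ := by
      rcases eq_or_lt_of_le hle with h | h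
      · rw [h]
      · exact le_of_lt (show r b₂ c₁ < r b₂ c₂ from r_anti b₂ h)
    rw [hr₁, hr₂] at *
    linarith
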